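/- For every integer n ≥ 1, budgets X_A, X_B with 0 < X_A ≤ X_B, and battlefield values w^A_i, w^B_i > 0 (i = 1,…,n), Equation (2) has at least one positive solution; that is, there exists γ > 0 such that X_B γ / X_A = (γ² Σ_{i∈Ω_A(γ)} (v^B_i)²/v^A_i + Σ_{i∉Ω_A(γ)} v^A_i) / (Σ_{i∈Ω_A(γ)} v^B_i + γ^{-2} Σ_{i∉Ω_A(γ)} (v^A_i)²/v^B_i). -/

import Mathlib

open Finset

/-- Normalized battlefield values: `nv w i = w i / ∑_j w j`. -/
noncomputable def nv {n : ℕ} (w : Fin n → ℝ) (i : Fin n) : ℝ := w i / ∑ j, w j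

/-- The set `Ω_A(γ) = {i : v^A_i / v^B_i > γ}`. -/
noncomputable def OmegaA {n : ℕ} (wA wB : Fin n → ℝ) (γ : ℝ) : Finset (Fin n) :=
  Finset.univ.filter fun i => γ < nv wA i / nv wB i

/-- Equation (2). -/
def Eq2 {n : ℕ} (XA XB : ℝ) (wA wB : Fin n → ℝ) (γ : ℝ) : Prop :=
  XB * γ / XA =
    (γ ^ 2 * ∑ i ∈ OmegaA wA wB γ, (nv wB i) ^ 2 / nv wA i
        + ∑ i ∈ (OmegaA wA wB γ)ᶜ, nv wA i) /
    (∑ i ∈ OmegaA wA wB γ, nv wB i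
        + (γ ^ 2)⁻¹ * ∑ i ∈ (OmegaA wA wB γ)ᶜ, (nv wA i) ^ 2 / nv wB i)

lemma blotto_h1 {x y γ : ℝ} (hx : 0 < x) (h : γ * y ≤ x) (hγy : 0 ≤ γ * y) :
    γ ^ 2 * (y ^ 2 / x) ≤ x := by
  rw [← mul_div_assoc, div_le_iff₀ hx]
  nlinarith [mul_self_le_mul_self hγy h]

lemma blotto_h2 {x y γ : ℝ} (hx : 0 < x) (h : x ≤ γ * y) :
    x ≤ γ ^ 2 * (y ^ 2 / x) := by
  rw [← mul_div_assoc, le_div_iff₀ hx]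
  nlinarith [mul_self_le_mul_self hx.le h]

lemma blotto_h3 {x y γ : ℝ} (hy : 0 < y) (hγ : 0 < γ) (h : γ * y ≤ x) :
    y ≤ (γ ^ 2)⁻¹ * (x ^ 2 / y) := by
  have e : (γ ^ 2)⁻¹ * (x ^ 2 / y) = x ^ 2 / (γ ^ 2 * y) := by
    field_simp
  rw [e, le_div_iff₀ (by positivity)]
  nlinarith [mul_self_le_mul_self (by positivity : (0:ℝ) ≤ γ * y) h]

lemma blotto_h4 {x y γ : ℝ} (hx : 0 < x) (hy : 0 < y) (hγ : 0 < γ) (h : x ≤ γ * y) :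
    (γ ^ 2)⁻¹ * (x ^ 2 / y) ≤ y := by
  have e : (γ ^ 2)⁻¹ * (x ^ 2 / y) = x ^ 2 / (γ ^ 2 * y) := by
    field_simp
  rw [e, div_le_iff₀ (by positivity)]
  nlinarith [mul_self_le_mul_self hx.le h]

/-- Equation (2) has at least one positive solution. -/
theorem stmt0 (n : ℕ) (hn : 1 ≤ n) (XA XB : ℝ) (hXA : 0 < XA) (hXAB : XA ≤ XB)
    (wA wB : Fin n → ℝ) (hwA : ∀ i, 0 < wA i) (hwB : ∀ i, 0 < wB i) :
    ∃ γ : ℝ, 0 < γ ∧ Eq2 XA XB wA wB γ := by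
  haveI : NeZero n := ⟨Nat.one_le_iff_ne_zero.mp hn⟩
  have hXB : 0 < XB := lt_of_lt_of_le hXA hXAB
  have hWA : 0 < ∑ j, wA j := Finset.sum_pos (fun i _ => hwA i) Finset.univ_nonempty
  have hWB : 0 < ∑ j, wB j := Finset.sum_pos (fun i _ => hwB i) Finset.univ_nonempty
  have ha : ∀ i, 0 < nv wA i := fun i => div_pos (hwA i) hWA
  have hb : ∀ i, 0 < nv wB i := fun i => div_pos (hwB i) hWB
  have hsa : ∑ i, nv wA i = 1 := by
    simp only [nv, ← Finset.sum_div]; exact div_self hWA.ne'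
  have hsb : ∑ i, nv wB i = 1 := by
    simp only [nv, ← Finset.sum_div]; exact div_self hWB.ne'
  set N : ℝ → ℝ := fun γ => ∑ i, min (nv wA i) (γ ^ 2 * ((nv wB i) ^ 2 / nv wA i)) with hNdef
  set D : ℝ → ℝ := fun γ => ∑ i, min (nv wB i) ((γ ^ 2)⁻¹ * ((nv wA i) ^ 2 / nv wB i)) with hDdef
  -- pointwise descriptions
  have hNpt : ∀ γ : ℝ, 0 < γ → ∀ i : Fin n,
      min (nv wA i) (γ ^ 2 * ((nv wB i) ^ 2 / nv wA i)) =
        if γ < nv wA i / nv wB i then γ ^ 2 * ((nv wB i) ^ 2 / nv wA i) else nv wA i := by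
    intro γ hγ i
    by_cases h : γ < nv wA i / nv wB i
    · rw [if_pos h]
      exact min_eq_right (blotto_h1 (ha i) ((lt_div_iff₀ (hb i)).mp h).le (mul_nonneg hγ.le (hb i).le))
    · rw [if_neg h]
      push_neg at h
      exact min_eq_left (blotto_h2 (ha i) ((div_le_iff₀ (hb i)).mp h))
  have hDpt : ∀ γ : ℝ, 0 < γ → ∀ i : Fin n,
      min (nv wB i) ((γ ^ 2)⁻¹ * ((nv wA i) ^ 2 / nv wB i)) =
        if γ < nv wA i / nv wB i then nv wB i else (γ ^ 2)⁻¹ * ((nv wA i) ^ 2 / nv wB i) := by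
    intro γ hγ i
    by_cases h : γ < nv wA i / nv wB i
    · rw [if_pos h]
      exact min_eq_left (blotto_h3 (hb i) hγ ((lt_div_iff₀ (hb i)).mp h).le)
    · rw [if_neg h]
      push_neg at h
      exact min_eq_right (blotto_h4 (ha i) (hb i) hγ ((div_le_iff₀ (hb i)).mp h))
  have hNeq : ∀ γ : ℝ, 0 < γ →
      N γ = γ ^ 2 * ∑ i ∈ OmegaA wA wB γ, (nv wB i) ^ 2 / nv wA i
        + ∑ i ∈ (OmegaA wA wB γ)ᶜ, nv wA i := by
    intro γ hγ
    rw [hNdef]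
    simp only [OmegaA, Finset.compl_filter, Finset.mul_sum]
    rw [show (∑ i, min (nv wA i) (γ ^ 2 * ((nv wB i) ^ 2 / nv wA i))) =
        ∑ i, (if γ < nv wA i / nv wB i then γ ^ 2 * ((nv wB i) ^ 2 / nv wA i) else nv wA i)
      from Finset.sum_congr rfl fun i _ => hNpt γ hγ i]
    rw [Finset.sum_ite]
  have hDeq : ∀ γ : ℝ, 0 < γ →
      D γ = ∑ i ∈ OmegaA wA wB γ, nv wB i
        + (γ ^ 2)⁻¹ * ∑ i ∈ (OmegaA wA wB γ)ᶜ, (nv wA i) ^ 2 / nv wB i := by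
    intro γ hγ
    rw [hDdef]
    simp only [OmegaA, Finset.compl_filter, Finset.mul_sum]
    rw [show (∑ i, min (nv wB i) ((γ ^ 2)⁻¹ * ((nv wA i) ^ 2 / nv wB i))) =
        ∑ i, (if γ < nv wA i / nv wB i then nv wB i else (γ ^ 2)⁻¹ * ((nv wA i) ^ 2 / nv wB i))
      from Finset.sum_congr rfl fun i _ => hDpt γ hγ i]
    rw [Finset.sum_ite]
  -- positivity of D
  have hDpos : ∀ γ : ℝ, 0 < γ → 0 < D γ := by
    intro γ hγ
    exact Finset.sum_pos (fun i _ => lt_min (hb i) (mul_pos (inv_pos.mpr (pow_pos hγ 2)) (div_pos (pow_pos (ha i) 2) (hb i)))) Finset.univ_nonempty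
  -- constants
  set S : ℝ := ∑ i, (nv wA i) ^ 2 / nv wB i with hSdef
  set T : ℝ := ∑ i, (nv wB i) ^ 2 / nv wA i with hTdef
  have hS : 0 < S := Finset.sum_pos (fun i _ => div_pos (pow_pos (ha i) 2) (hb i)) Finset.univ_nonempty
  have hT : 0 < T := Finset.sum_pos (fun i _ => div_pos (pow_pos (hb i) 2) (ha i)) Finset.univ_nonempty
  set m : ℝ := Finset.univ.inf' Finset.univ_nonempty (fun i => nv wA i / nv wB i) with hmdef
  set M : ℝ := Finset.univ.sup' Finset.univ_nonempty (fun i => nv wA i / nv wB i) with hMdef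
  have hm : 0 < m := by
    rw [hmdef, Finset.lt_inf'_iff]
    exact fun i _ => div_pos (ha i) (hb i)
  have hmM : m ≤ M := by
    rw [hmdef, hMdef]
    exact le_trans (Finset.inf'_le _ (Finset.mem_univ (Classical.arbitrary (Fin n))))
      (Finset.le_sup' (f := fun i => nv wA i / nv wB i) (Finset.mem_univ (Classical.arbitrary (Fin n))))
  set γ₁ : ℝ := min m (XB / (2 * XA * T)) with hγ₁def
  set γ₂ : ℝ := max M (2 * XB * S / XA) with hγ₂def
  have hγ₁ : 0 < γ₁ := lt_min hm (by positivity)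
  have hγ₂ : 0 < γ₂ := lt_of_lt_of_le hm (le_trans hmM (le_max_left _ _))
  have hγ₁₂ : γ₁ ≤ γ₂ := le_trans (min_le_left _ _) (le_trans hmM (le_max_left _ _))
  set F : ℝ → ℝ := fun γ => XB * γ * D γ - XA * N γ with hFdef
  -- F γ₁ > 0
  have hDγ₁ : D γ₁ = 1 := by
    simp only [hDdef]
    have : ∀ i : Fin n, min (nv wB i) ((γ₁ ^ 2)⁻¹ * ((nv wA i) ^ 2 / nv wB i)) = nv wB i := by
      intro i
      refine min_eq_left (blotto_h3 (hb i) hγ₁ ?_)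
      rw [← le_div_iff₀ (hb i)]
      exact le_trans (min_le_left _ _) (Finset.inf'_le _ (Finset.mem_univ i))
    rw [Finset.sum_congr rfl fun i _ => this i]
    exact hsb
  have hNγ₁ : N γ₁ ≤ γ₁ ^ 2 * T := by
    simp only [hNdef, hTdef, Finset.mul_sum]
    exact Finset.sum_le_sum fun i _ => min_le_right _ _
  have hFγ₁ : 0 < F γ₁ := by
    rw [hFdef]
    simp only [hDγ₁]
    have h1 : γ₁ * (2 * XA * T) ≤ XB := by
      rw [← le_div_iff₀ (by positivity)]
      exact min_le_right _ _
    have h2 : XA * N γ₁ ≤ XA * (γ₁ ^ 2 * T) := by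
      exact mul_le_mul_of_nonneg_left hNγ₁ hXA.le
    nlinarith [mul_le_mul_of_nonneg_left h1 hγ₁.le]
  -- F γ₂ < 0
  have hMle : ∀ i : Fin n, nv wA i / nv wB i ≤ γ₂ := by
    intro i
    rw [hγ₂def, hMdef]
    exact le_trans (Finset.le_sup' (f := fun i => nv wA i / nv wB i) (Finset.mem_univ i)) (le_max_left _ _)
  have hNγ₂ : N γ₂ = 1 := by
    simp only [hNdef]
    have : ∀ i : Fin n, min (nv wA i) (γ₂ ^ 2 * ((nv wB i) ^ 2 / nv wA i)) = nv wA i := by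
      intro i
      exact min_eq_left (blotto_h2 (ha i) ((div_le_iff₀ (hb i)).mp (hMle i)))
    rw [Finset.sum_congr rfl fun i _ => this i]
    exact hsa
  have hDγ₂ : D γ₂ = (γ₂ ^ 2)⁻¹ * S := by
    simp only [hDdef, hSdef, Finset.mul_sum]
    have : ∀ i : Fin n, min (nv wB i) ((γ₂ ^ 2)⁻¹ * ((nv wA i) ^ 2 / nv wB i)) =
        (γ₂ ^ 2)⁻¹ * ((nv wA i) ^ 2 / nv wB i) := by
      intro i
      exact min_eq_right (blotto_h4 (ha i) (hb i) hγ₂ ((div_le_iff₀ (hb i)).mp (hMle i)))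
    exact Finset.sum_congr rfl fun i _ => this i
  have hFγ₂ : F γ₂ < 0 := by
    rw [hFdef]
    simp only [hNγ₂, hDγ₂]
    have h1 : 2 * XB * S / XA ≤ γ₂ := le_max_right _ _
    rw [div_le_iff₀ hXA] at h1
    have e : XB * γ₂ * ((γ₂ ^ 2)⁻¹ * S) = XB * S / γ₂ := by
      field_simp
    rw [e]
    have h2 : XB * S / γ₂ < XA := by
      rw [div_lt_iff₀ hγ₂]
      nlinarith [mul_pos hXB hS]
    linarith
  -- continuity of F on [γ₁, γ₂]
  have hcont : ContinuousOn F (Set.Icc γ₁ γ₂) := by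
    have hne0 : ∀ γ ∈ Set.Icc γ₁ γ₂, γ ^ 2 ≠ 0 := by
      intro γ hγ
      have : 0 < γ := lt_of_lt_of_le hγ₁ hγ.1
      positivity
    have hNc : ContinuousOn N (Set.Icc γ₁ γ₂) := by
      apply continuousOn_finset_sum
      intro i _
      exact continuous_min.comp_continuousOn (continuousOn_const.prodMk (((continuous_pow 2).continuousOn).mul continuousOn_const))
    have hDc : ContinuousOn D (Set.Icc γ₁ γ₂) := by
      apply continuousOn_finset_sum
      intro i _
      exact continuous_min.comp_continuousOn (continuousOn_const.prodMk
        ((((continuous_pow 2).continuousOn).inv₀ hne0).mul continuousOn_const))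
    exact ((continuousOn_const.mul continuousOn_id).mul hDc).sub (continuousOn_const.mul hNc)
  -- IVT
  have hmem : (0:ℝ) ∈ Set.Icc (F γ₂) (F γ₁) := ⟨hFγ₂.le, hFγ₁.le⟩
  obtain ⟨γ, hγmem, hFγ⟩ := intermediate_value_Icc' hγ₁₂ hcont hmem
  have hγpos : 0 < γ := lt_of_lt_of_le hγ₁ hγmem.1
  refine ⟨γ, hγpos, ?_⟩
  have hD : 0 < D γ := hDpos γ hγpos
  have key : XB * γ * D γ = XA * N γ := by
    have := hFγ; rw [hFdef] at this; linarith [sub_eq_zero.mp this]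
  rw [Eq2, ← hNeq γ hγpos, ← hDeq γ hγpos, div_eq_div_iff hXA.ne' hD.ne']
  linarith [key]
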